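/- There exists ε₀ > 0 such that for every 0 < ε < ε₀: u_ε(x₁, 0) = 1/2 > 0, and the connected component Ω_ε of the open set {(x,y) : u_ε(x,y) > 0} containing (x₁, 0) is a nonempty open connected set contained in the open rectangle (−x_ε, x_ε) × (−(1+h), 1+h); in particular Ω_ε is bounded. -/

import Mathlib

set_option maxHeartbeats 1000000


open Set Filter Topology

/-- The holomorphic function `F(z) = -∏ (z - xᵢ)`. -/
noncomputable def FF (k : ℕ) (x : Fin (2*k) → ℝ) (z : ℂ) : ℂ :=
  -∏ i, (z - (x i : ℂ))

/-- `v(x,y) = Re F(x + iy)`, a harmonic function. -/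
noncomputable def vv (k : ℕ) (x : Fin (2*k) → ℝ) (p : ℝ × ℝ) : ℝ :=
  (FF k x ((p.1 : ℂ) + (p.2 : ℂ) * Complex.I)).re

/-- The restriction `f` of `F` to the real line. -/
noncomputable def ff (k : ℕ) (x : Fin (2*k) → ℝ) (t : ℝ) : ℝ :=
  (FF k x (t : ℂ)).re

/-- `u_ε(x,y) = 1/2 - y²/2 + ε (y³ - 3 x² y) + ε^{3/2} v(x,y)`. -/
noncomputable def uu (k : ℕ) (x : Fin (2*k) → ℝ) (ε : ℝ) (p : ℝ × ℝ) : ℝ :=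
  1/2 - p.2^2/2 + ε * (p.2^3 - 3*p.1^2*p.2) + ε ^ ((3:ℝ)/2) * vv k x p

/-- `x_ε = (3 ε^{-3/2})^{1/(2k)}`. -/
noncomputable def xeps (k : ℕ) (ε : ℝ) : ℝ :=
  (3 * ε ^ (-(3:ℝ)/2)) ^ ((1:ℝ)/(2*k))

/-- `Ω_ε`: the connected component of `{u_ε > 0}` containing `(x₁, 0)`. -/
noncomputable def Omeg (k : ℕ) (hk : 2 ≤ k) (x : Fin (2*k) → ℝ) (ε : ℝ) : Set (ℝ × ℝ) :=
  connectedComponentIn {p : ℝ × ℝ | 0 < uu k x ε p} (x ⟨0, by omega⟩, 0)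

/-- partial derivative in the first variable. -/
noncomputable def px (g : ℝ × ℝ → ℝ) (p : ℝ × ℝ) : ℝ :=
  deriv (fun t => g (t, p.2)) p.1

/-- partial derivative in the second variable. -/
noncomputable def py (g : ℝ × ℝ → ℝ) (p : ℝ × ℝ) : ℝ :=
  deriv (fun t => g (p.1, t)) p.2

/-- `N_u = u_xx u_y² - 2 u_xy u_x u_y + u_yy u_x²`. -/
noncomputable def NN (g : ℝ × ℝ → ℝ) (p : ℝ × ℝ) : ℝ :=
  px (px g) p * (py g p)^2 - 2 * py (px g) p * px g p * py g p + py (py g) p * (px g p)^2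

/-- Oriented curvature of a level curve of `g`. -/
noncomputable def CurvU (g : ℝ × ℝ → ℝ) (p : ℝ × ℝ) : ℝ :=
  -(NN g p) / ((px g p)^2 + (py g p)^2) ^ ((3:ℝ)/2)



lemma prodEst {ι : Type*} (s : Finset ι) (a : ι → ℝ) (Y : ℝ) (ha : ∀ i ∈ s, 0 ≤ a i) :
    ‖(∏ i ∈ s, ((a i : ℂ) + Y * Complex.I)) - ∏ i ∈ s, (a i : ℂ)‖
      ≤ ∏ i ∈ s, (a i + |Y|) - ∏ i ∈ s, a i := by
  induction s using Finset.cons_induction with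
  | empty => simp
  | cons j s hj ih =>
    have ha' : ∀ i ∈ s, 0 ≤ a i := fun i hi => ha i (Finset.mem_cons.2 (Or.inr hi))
    have haj : 0 ≤ a j := ha j (Finset.mem_cons_self j s)
    rw [Finset.prod_cons, Finset.prod_cons, Finset.prod_cons, Finset.prod_cons]
    set P := ∏ i ∈ s, ((a i : ℂ) + Y * Complex.I) with hP
    set Q := ∏ i ∈ s, ((a i : ℂ)) with hQd
    have hQ : ‖Q‖ = ∏ i ∈ s, a i := by
      rw [hQd, ← Complex.ofReal_prod, Complex.norm_real, Real.norm_eq_abs,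
        abs_of_nonneg (Finset.prod_nonneg ha')]
    have hfac : ‖(a j : ℂ) + Y * Complex.I‖ ≤ a j + |Y| := by
      refine (Complex.norm_le_abs_re_add_abs_im _).trans ?_
      simp [abs_of_nonneg haj]
    have key : ((a j : ℂ) + Y*Complex.I) * P - (a j : ℂ) * Q
        = ((a j : ℂ) + Y*Complex.I) * (P - Q) + ((Y:ℂ) * Complex.I) * Q := by ring
    have hprodnn : (0:ℝ) ≤ ∏ i ∈ s, a i := Finset.prod_nonneg ha'
    calc ‖((a j:ℂ) + Y*Complex.I) * P - (a j:ℂ) * Q‖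
        ≤ ‖(a j:ℂ) + Y*Complex.I‖ * ‖P - Q‖
            + ‖(Y:ℂ)*Complex.I‖ * ‖Q‖ := by
          rw [key]
          exact (norm_add_le _ _).trans (by rw [norm_mul, norm_mul])
      _ ≤ (a j + |Y|) * (∏ i ∈ s, (a i + |Y|) - ∏ i ∈ s, a i) + |Y| * ∏ i ∈ s, a i := by
          have h1 : ‖(Y:ℂ)*Complex.I‖ = |Y| := by
            rw [norm_mul, Complex.norm_I, Complex.norm_real, Real.norm_eq_abs, mul_one]
          rw [h1, hQ]
          have h2 := ih ha'
          have h3 : (0:ℝ) ≤ a j + |Y| := by positivity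
          exact add_le_add (mul_le_mul hfac h2 (norm_nonneg _) h3) le_rfl
      _ = (a j + |Y|) * ∏ i ∈ s, (a i + |Y|) - a j * ∏ i ∈ s, a i := by ring

lemma reProd (n : ℕ) (hn : 1 ≤ n) (a : Fin n → ℝ) (A Y : ℝ)
    (hA : 8 * n ≤ A) (ha : ∀ i, A ≤ a i) (hY : |Y| ≤ 2) :
    1/2 * A ^ n ≤ (∏ i, ((a i : ℂ) + Y * Complex.I)).re := by
  have hn0 : (0:ℝ) < n := by exact_mod_cast hn
  have hA0 : (0:ℝ) < A := lt_of_lt_of_le (by positivity) hA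
  have ha0 : ∀ i ∈ Finset.univ, (0:ℝ) ≤ a i := fun i _ => hA0.le.trans (ha i)
  have hQA : A ^ n ≤ ∏ i, a i := by
    calc A ^ n = ∏ _i : Fin n, A := by
          rw [Finset.prod_const, Finset.card_univ, Fintype.card_fin]
      _ ≤ ∏ i, a i := Finset.prod_le_prod (fun _ _ => hA0.le) (fun i _ => ha i)
  have hQ0 : (0:ℝ) < ∏ i, a i := lt_of_lt_of_le (by positivity) hQA
  set w : ℝ := 2 / A with hw
  have hw0 : 0 < w := by positivity
  have hnw : (n:ℝ) * w ≤ 1/4 := by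
    have h1 : (n:ℝ) * w = 2*n/A := by rw [hw]; ring
    have h2 : 2*(n:ℝ)/A ≤ 2*n/(8*n) :=
      div_le_div_of_nonneg_left (by positivity) (by positivity) hA
    have h3 : 2*(n:ℝ)/(8*n) = 1/4 := by field_simp; ring
    rw [h1]; rw [h3] at h2; exact h2
  have hw1 : w ≤ 1/4 := by
    have : w * 1 ≤ w * n := mul_le_mul_of_nonneg_left (by exact_mod_cast hn) hw0.le
    nlinarith
  have hber : 1 - (n:ℝ)*w ≤ (1 - w)^n := by
    have := one_add_mul_le_pow (a := -w) (by nlinarith) n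
    simpa [sub_eq_add_neg, mul_comm] using this
  have hup : (1 + w)^n ≤ 4/3 := by
    have h2 : (1+w)^n * (1-w)^n ≤ 1 := by
      rw [← mul_pow]
      apply pow_le_one₀ (by nlinarith) (by nlinarith)
    have h3 : (3:ℝ)/4 ≤ (1-w)^n := by linarith
    nlinarith [pow_nonneg (by linarith : (0:ℝ) ≤ 1 + w) n,
      mul_le_mul_of_nonneg_left h3 (pow_nonneg (by linarith : (0:ℝ) ≤ 1 + w) n)]
  have hAw : A * w = 2 := by have := hA0.ne'; rw [hw]; field_simp
  have hprod2 : ∏ i, (a i + |Y|) ≤ (1+w)^n * ∏ i, a i := by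
    calc ∏ i, (a i + |Y|) ≤ ∏ i, (a i * (1 + w)) := by
          apply Finset.prod_le_prod (fun i hi => add_nonneg (ha0 i hi) (abs_nonneg _))
          intro i _
          have : 2 ≤ a i * w := by
            calc (2:ℝ) = A * w := hAw.symm
              _ ≤ a i * w := by nlinarith [ha i]
          nlinarith [hY]
      _ = (1+w)^n * ∏ i, a i := by
          rw [Finset.prod_mul_distrib, Finset.prod_const, Finset.card_univ, Fintype.card_fin]
          ring
  set P := ∏ i, ((a i : ℂ) + Y * Complex.I) with hPd
  have hest := prodEst Finset.univ a Y ha0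
  have hreQ : (∏ i, ((a i:ℝ):ℂ)).re = ∏ i, a i := by
    rw [← Complex.ofReal_prod, Complex.ofReal_re]
  have habs := Complex.abs_re_le_norm (P - ∏ i, ((a i:ℝ):ℂ))
  have hre1 : (P - ∏ i, ((a i:ℝ):ℂ)).re = P.re - ∏ i, a i := by
    rw [Complex.sub_re, hreQ]
  rw [hre1] at habs
  have h6 : |P.re - ∏ i, a i| ≤ ∏ i, (a i + |Y|) - ∏ i, a i := le_trans habs hest
  have h7 := (abs_le.1 h6).1
  -- P.re ≥ 2∏a - ∏(a+|Y|) ≥ 2∏a - (4/3)∏a = (2/3)∏a ≥ (1/2)A^n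
  nlinarith [hprod2, hQA]

lemma reProdX (k : ℕ) (hk : 1 ≤ k) (x : Fin (2*k) → ℝ) (M X Y : ℝ)
    (hM : ∀ i, |x i| ≤ M) (hY : |Y| ≤ 2) (hX : M + 16*k ≤ |X|) :
    1/2 * (|X| - M)^(2*k) ≤ (∏ i, ((X:ℂ) + (Y:ℂ)*Complex.I - (x i:ℂ))).re := by
  have hM0 : 0 ≤ M := (abs_nonneg _).trans (hM ⟨0, by omega⟩)
  have hA : 8 * ((2*k : ℕ):ℝ) ≤ |X| - M := by push_cast; linarith
  rcases le_or_gt 0 X with hX0 | hX0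
  · have hXa : |X| = X := abs_of_nonneg hX0
    have hcongr : (∏ i, ((X:ℂ) + (Y:ℂ)*Complex.I - (x i:ℂ)))
        = ∏ i, (((X - x i : ℝ):ℂ) + Y * Complex.I) := by
      apply Finset.prod_congr rfl; intro i _; push_cast; ring
    rw [hcongr]
    exact reProd (2*k) (by omega) (fun i => X - x i) (|X| - M) Y hA
      (fun i => by have h2 := (abs_le.1 (hM i)).2; rw [hXa]; linarith) hY
  · have hXa : |X| = -X := abs_of_neg hX0
    have hcongr : (∏ i, ((X:ℂ) + (Y:ℂ)*Complex.I - (x i:ℂ)))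
        = ∏ i, (-1 : ℂ) * (((x i - X : ℝ):ℂ) + (-Y : ℝ) * Complex.I) := by
      apply Finset.prod_congr rfl; intro i _; push_cast; ring
    rw [hcongr, Finset.prod_mul_distrib, Finset.prod_const, Finset.card_univ,
      Fintype.card_fin, (Even.neg_one_pow ⟨k, by ring⟩), one_mul]
    have hY' : |(-Y : ℝ)| ≤ 2 := by rwa [abs_neg]
    exact reProd (2*k) (by omega) (fun i => x i - X) (|X| - M) (-Y) hA
      (fun i => by have h2 := (abs_le.1 (hM i)).1; rw [hXa]; linarith) hY'

lemma xeps_pos (k : ℕ) (ε : ℝ) (hε : 0 < ε) : 0 < xeps k ε := by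
  unfold xeps
  positivity

lemma xeps_pow (k : ℕ) (hk : 1 ≤ k) (ε : ℝ) (hε : 0 < ε) :
    ε ^ ((3:ℝ)/2) * (xeps k ε)^(2*k) = 3 := by
  have hk0 : ((k:ℝ)) ≠ 0 := by positivity
  have hb : (0:ℝ) ≤ 3 * ε ^ (-(3:ℝ)/2) := by positivity
  rw [xeps, ← Real.rpow_natCast ((3 * ε ^ (-(3:ℝ)/2)) ^ ((1:ℝ)/(2*k))) (2*k),
    ← Real.rpow_mul hb]
  have hkr0 : (0:ℝ) < (k:ℝ) := by positivity
  have h1 : (1:ℝ)/(2*(k:ℝ)) * ((2*k:ℕ):ℝ) = 1 := by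
    push_cast
    try field_simp
  rw [h1, Real.rpow_one, mul_comm (3:ℝ), ← mul_assoc, ← Real.rpow_add hε]
  norm_num

lemma xeps_sq (k : ℕ) (hk : 2 ≤ k) (ε : ℝ) (hε : 0 < ε) (hε1 : ε ≤ 1) :
    ε * (xeps k ε)^2 ≤ 3 * ε ^ ((1:ℝ)/4) := by
  have hk0 : (0:ℝ) < (k:ℝ) := by positivity
  have hk2 : (2:ℝ) ≤ (k:ℝ) := by exact_mod_cast hk
  have hb : (0:ℝ) ≤ 3 * ε ^ (-(3:ℝ)/2) := by positivity
  have h1 : (xeps k ε)^2 = 3 ^ ((1:ℝ)/(k:ℝ)) * ε ^ (-(3:ℝ)/(2*(k:ℝ))) := by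
    rw [xeps, ← Real.rpow_natCast ((3 * ε ^ (-(3:ℝ)/2)) ^ ((1:ℝ)/(2*k))) 2,
      ← Real.rpow_mul hb]
    have h2 : (1:ℝ)/(2*(k:ℝ)) * ((2:ℕ):ℝ) = 1/(k:ℝ) := by push_cast; try field_simp; try ring
    rw [h2, Real.mul_rpow (by norm_num) (Real.rpow_nonneg hε.le _),
      ← Real.rpow_mul hε.le]
    congr 1
    field_simp
  rw [h1]
  have h3 : ε * (3 ^ ((1:ℝ)/(k:ℝ)) * ε ^ (-(3:ℝ)/(2*(k:ℝ))))
      = 3 ^ ((1:ℝ)/(k:ℝ)) * ε ^ (1 + -(3:ℝ)/(2*(k:ℝ))) := by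
    rw [Real.rpow_add hε, Real.rpow_one]; ring
  rw [h3]
  have h4 : (3:ℝ) ^ ((1:ℝ)/(k:ℝ)) ≤ 3 := by
    calc (3:ℝ) ^ ((1:ℝ)/(k:ℝ)) ≤ 3 ^ (1:ℝ) :=
          Real.rpow_le_rpow_of_exponent_le (by norm_num)
            (by rw [div_le_one hk0]; linarith)
      _ = 3 := Real.rpow_one 3
  have h5 : ε ^ (1 + -(3:ℝ)/(2*(k:ℝ))) ≤ ε ^ ((1:ℝ)/4) := by
    apply Real.rpow_le_rpow_of_exponent_ge hε hε1
    have : (3:ℝ)/(2*(k:ℝ)) ≤ 3/4 :=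
      div_le_div_of_nonneg_left (by norm_num) (by norm_num) (by linarith)
    have h6 : -(3:ℝ)/(2*(k:ℝ)) = -(3/(2*(k:ℝ))) := by ring
    rw [h6]
    linarith
  calc 3 ^ ((1:ℝ)/(k:ℝ)) * ε ^ (1 + -(3:ℝ)/(2*(k:ℝ)))
      ≤ 3 * ε ^ ((1:ℝ)/4) :=
        mul_le_mul h4 h5 (Real.rpow_nonneg hε.le _) (by norm_num)

lemma vv_eq (k : ℕ) (x : Fin (2*k) → ℝ) (X Y : ℝ) :
    vv k x (X, Y) = -(∏ i, ((X:ℂ) + (Y:ℂ)*Complex.I - (x i:ℂ))).re := by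
  simp [vv, FF]

lemma boundary (k : ℕ) (hk : 2 ≤ k) (x : Fin (2*k) → ℝ) (h M : ℝ)
    (hh0 : 0 < h) (hh1 : h < 1)
    (hM : ∀ i, |x i| ≤ M) (hM1 : 1 ≤ M) (ε : ℝ) (hε : 0 < ε)
    (hT : 6*k*(M+3) ≤ xeps k ε)
    (hG : 8*ε + 6*ε*(xeps k ε)^2 + (6*k*(M+3) + 2 + M)^(2*k) * ε ^ ((3:ℝ)/2)
      < min h (1/2))
    (X Y : ℝ) (hXle : |X| ≤ xeps k ε) (hYle : |Y| ≤ 1+h)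
    (hedge : xeps k ε ≤ |X| ∨ 1+h ≤ |Y|) :
    uu k x ε (X, Y) ≤ 0 := by
  have hkr : (2:ℝ) ≤ (k:ℝ) := by exact_mod_cast hk
  set a := xeps k ε with ha
  have ha0 : 0 < a := lt_of_lt_of_le (by nlinarith) hT
  have hεr : (0:ℝ) ≤ ε ^ ((3:ℝ)/2) := Real.rpow_nonneg hε.le _
  have hC0 : (0:ℝ) ≤ (6*k*(M+3) + 2 + M)^(2*k) := by positivity
  have hk16 : M + 16*(k:ℝ) ≤ 6*k*(M+3) := by nlinarith
  have hY2 : |Y| ≤ 2 := hYle.trans (by linarith)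
  have hYb := abs_le.1 hY2
  have hX2 : X^2 ≤ a^2 := by
    have h1 := sq_abs X
    have h2 := mul_self_le_mul_self (abs_nonneg X) hXle
    nlinarith
  -- the epsilon-term bound
  have hEterm : ε * (Y^3 - 3*X^2*Y) ≤ 8*ε + 6*ε*a^2 := by
    have hcube : Y^3 ≤ 8 := by
      nlinarith [mul_nonneg (by linarith : (0:ℝ) ≤ 2 - Y)
        (by nlinarith [sq_nonneg (Y+1)] : (0:ℝ) ≤ Y^2 + 2*Y + 4)]
    have hmix : -(3*X^2*Y) ≤ 6*a^2 := by
      have h1 : -Y ≤ 2 := by linarith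
      have h2 : 3*X^2*(-Y) ≤ 3*X^2*2 :=
        mul_le_mul_of_nonneg_left h1 (by positivity)
      nlinarith [sq_nonneg X]
    have : Y^3 - 3*X^2*Y ≤ 8 + 6*a^2 := by linarith
    calc ε * (Y^3 - 3*X^2*Y) ≤ ε * (8 + 6*a^2) :=
          mul_le_mul_of_nonneg_left this hε.le
      _ = 8*ε + 6*ε*a^2 := by ring
  have huu : uu k x ε (X, Y)
      = 1/2 - Y^2/2 + ε*(Y^3 - 3*X^2*Y) + ε ^ ((3:ℝ)/2) * vv k x (X, Y) := rfl
  rcases hedge with hside | htop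
  · -- |X| = a : side edge
    have hXa : |X| = a := le_antisymm hXle hside
    have hXT : M + 16*(k:ℝ) ≤ |X| := by rw [hXa]; linarith
    have hRe := reProdX k (by omega) x M X Y hM hY2 hXT
    have hvb : vv k x (X, Y) ≤ -(1/2 * (a - M)^(2*k)) := by
      rw [vv_eq]; rw [hXa] at hRe; linarith
    -- (a - M)^(2k) ≥ (2/3) a^(2k)
    have hMa : 6*(k:ℝ)*M ≤ a := by
      have h18 : (0:ℝ) ≤ 18*(k:ℝ) := by positivity
      have he : 6*(k:ℝ)*M + 18*(k:ℝ) = 6*k*(M+3) := by ring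
      linarith
    have hstep1 : a * (1 - 1/(6*(k:ℝ))) ≤ a - M := by
      have hM6 : M ≤ a/(6*(k:ℝ)) := by
        rw [le_div_iff₀ (by positivity)]; linarith [hMa]
      have : a * (1 - 1/(6*(k:ℝ))) = a - a/(6*(k:ℝ)) := by field_simp
      linarith
    have hpos1 : (0:ℝ) ≤ a * (1 - 1/(6*(k:ℝ))) := by
      have : 1/(6*(k:ℝ)) ≤ 1 := by
        rw [div_le_one (by positivity)]; nlinarith
      nlinarith
    have hber : (2:ℝ)/3 ≤ (1 - 1/(6*(k:ℝ)))^(2*k) := by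
      have hbb := one_add_mul_le_pow
        (a := -(1/(6*(k:ℝ)))) (by nlinarith [one_div_pos.2 (by positivity : (0:ℝ) < 6*(k:ℝ))]) (2*k)
      have hc : 1 + ((2*k:ℕ):ℝ) * -(1/(6*(k:ℝ))) = 2/3 := by
        push_cast
        field_simp
        ring
      rw [hc] at hbb
      simpa [sub_eq_add_neg] using hbb
    have hpow : (2:ℝ)/3 * a^(2*k) ≤ (a - M)^(2*k) := by
      calc (2:ℝ)/3 * a^(2*k) ≤ (1 - 1/(6*(k:ℝ)))^(2*k) * a^(2*k) :=
            mul_le_mul_of_nonneg_right hber (pow_nonneg ha0.le (2*k))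
        _ = (a * (1 - 1/(6*(k:ℝ))))^(2*k) := by rw [mul_pow]; ring
        _ ≤ (a - M)^(2*k) := pow_le_pow_left₀ hpos1 hstep1 _
    have hxp := xeps_pow k (by omega) ε hε
    rw [← ha] at hxp
    have hfinal : ε ^ ((3:ℝ)/2) * vv k x (X, Y) ≤ -1 := by
      have h1 : vv k x (X, Y) ≤ -(1/3 * a^(2*k)) := by linarith [hvb, hpow]
      have h2 : ε ^ ((3:ℝ)/2) * vv k x (X, Y) ≤ ε ^ ((3:ℝ)/2) * (-(1/3 * a^(2*k))) :=
        mul_le_mul_of_nonneg_left h1 hεr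
      have h3 : ε ^ ((3:ℝ)/2) * (-(1/3 * a^(2*k))) = -(1/3) * (ε ^ ((3:ℝ)/2) * a^(2*k)) := by
        ring
      rw [h3, hxp] at h2
      linarith
    have hmin : min h (1/2) ≤ 1/2 := min_le_right _ _
    rw [huu]
    linarith [sq_nonneg Y, mul_nonneg hC0 hεr, hEterm, hfinal, hG, hmin]
  · -- |Y| = 1 + h : top/bottom edge
    have hYa : |Y| = 1 + h := le_antisymm hYle htop
    have hYsq : Y^2 = (1+h)^2 := by rw [← sq_abs, hYa]
    have hhead : 1/2 - Y^2/2 ≤ -h := by rw [hYsq]; nlinarith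
    have hmin : min h (1/2) ≤ h := min_le_left _ _
    rcases le_or_gt (M + 16*(k:ℝ)) |X| with hbig | hsmall
    · have hRe := reProdX k (by omega) x M X Y hM hY2 hbig
      have hvb : vv k x (X, Y) ≤ 0 := by
        rw [vv_eq]
        have hXM : (0:ℝ) ≤ |X| - M := by
          have : (0:ℝ) ≤ 16*(k:ℝ) := by positivity
          linarith
        have h0 : (0:ℝ) ≤ 1/2 * (|X| - M)^(2*k) :=
          mul_nonneg (by norm_num) (pow_nonneg hXM _)
        linarith
      have : ε ^ ((3:ℝ)/2) * vv k x (X, Y) ≤ 0 :=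
        mul_nonpos_of_nonneg_of_nonpos hεr hvb
      rw [huu]
      linarith [mul_nonneg hC0 hεr, hEterm, hhead, hG, hmin]
    · -- |X| small: use crude bound on vv
      have hvb : vv k x (X, Y) ≤ (6*k*(M+3) + 2 + M)^(2*k) := by
        rw [vv_eq]
        have habs : ‖∏ i, ((X:ℂ) + (Y:ℂ)*Complex.I - (x i:ℂ))‖
            ≤ (6*k*(M+3) + 2 + M)^(2*k) := by
          rw [norm_prod]
          calc ∏ i, ‖(X:ℂ) + (Y:ℂ)*Complex.I - (x i:ℂ)‖
              ≤ ∏ _i : Fin (2*k), (6*k*(M+3) + 2 + M) := by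
                apply Finset.prod_le_prod (fun i _ => norm_nonneg _)
                intro i _
                refine (Complex.norm_le_abs_re_add_abs_im _).trans ?_
                have hre : ((X:ℂ) + (Y:ℂ)*Complex.I - (x i:ℂ)).re = X - x i := by simp
                have him : ((X:ℂ) + (Y:ℂ)*Complex.I - (x i:ℂ)).im = Y := by simp
                rw [hre, him]
                have h1 : |X - x i| ≤ |X| + |x i| := abs_sub _ _
                have h2 := hM i
                nlinarith [abs_nonneg X, hY2]
            _ = (6*k*(M+3) + 2 + M)^(2*k) := by
                rw [Finset.prod_const, Finset.card_univ, Fintype.card_fin]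
        have := neg_abs_le ((∏ i, ((X:ℂ) + (Y:ℂ)*Complex.I - (x i:ℂ))).re)
        have h4 := Complex.abs_re_le_norm (∏ i, ((X:ℂ) + (Y:ℂ)*Complex.I - (x i:ℂ)))
        have h5 := (abs_le.1 h4).1
        linarith [neg_le_neg h5]
      have h6 : ε ^ ((3:ℝ)/2) * vv k x (X, Y)
          ≤ (6*k*(M+3) + 2 + M)^(2*k) * ε ^ ((3:ℝ)/2) := by
        rw [mul_comm ((6*k*(M+3) + 2 + M)^(2*k))]
        exact mul_le_mul_of_nonneg_left hvb hεr
      rw [huu]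
      linarith [hEterm, hhead, h6, hG, hmin]

lemma uu_continuous (k : ℕ) (x : Fin (2*k) → ℝ) (ε : ℝ) : Continuous (uu k x ε) := by
  have h1 : Continuous fun p : ℝ × ℝ => ((p.1:ℂ) + (p.2:ℂ) * Complex.I) :=
    (Complex.continuous_ofReal.comp continuous_fst).add
      ((Complex.continuous_ofReal.comp continuous_snd).mul continuous_const)
  have h2 : Continuous (FF k x) := by
    unfold FF
    exact (continuous_finset_prod _ fun i _ => continuous_id.sub continuous_const).neg
  have h3 : Continuous (vv k x) := Complex.continuous_re.comp (h2.comp h1)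
  unfold uu
  exact (((continuous_const.sub ((continuous_snd.pow 2).div_const 2)).add
    (continuous_const.mul ((continuous_snd.pow 3).sub
      ((continuous_const.mul (continuous_fst.pow 2)).mul continuous_snd)))).add
    (continuous_const.mul h3))

lemma uu_val (k : ℕ) (x : Fin (2*k) → ℝ) (ε : ℝ) (i0 : Fin (2*k)) :
    uu k x ε (x i0, 0) = 1/2 := by
  have hF : FF k x ((x i0 : ℂ)) = 0 := by
    unfold FF
    rw [Finset.prod_eq_zero (Finset.mem_univ i0) (by simp), neg_zero]
  have hv : vv k x (x i0, 0) = 0 := by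
    unfold vv
    simp only [Complex.ofReal_zero, zero_mul, add_zero]
    rw [hF, Complex.zero_re]
  unfold uu
  rw [hv]
  norm_num

theorem stmt4 (k : ℕ) (hk : 2 ≤ k) (x : Fin (2*k) → ℝ) (hx : StrictMono x)
    (h : ℝ) (hh : h ∈ Set.Ioo (0:ℝ) 1) :
    ∃ ε₀ > (0:ℝ), ∀ ε : ℝ, 0 < ε → ε < ε₀ →
      uu k x ε (x ⟨0, by omega⟩, 0) = 1/2 ∧ (0:ℝ) < 1/2 ∧
      (Omeg k hk x ε).Nonempty ∧
      IsOpen (Omeg k hk x ε) ∧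
      IsConnected (Omeg k hk x ε) ∧
      Omeg k hk x ε ⊆ Set.Ioo (-(xeps k ε)) (xeps k ε) ×ˢ Set.Ioo (-(1+h)) (1+h) ∧
      Bornology.IsBounded (Omeg k hk x ε) := by
  obtain ⟨hh0, hh1⟩ := hh
  have hkr : (2:ℝ) ≤ (k:ℝ) := by exact_mod_cast hk
  set i0 : Fin (2*k) := ⟨0, by omega⟩ with hi0
  have hne : (Finset.univ : Finset (Fin (2*k))).Nonempty := ⟨i0, Finset.mem_univ _⟩
  set M : ℝ := (Finset.univ.sup' hne fun i => |x i|) + 1 with hMdef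
  have hM : ∀ i, |x i| ≤ M := fun i =>
    le_trans (Finset.le_sup' (f := fun i => |x i|) (Finset.mem_univ i)) (by linarith)
  have hM1 : 1 ≤ M := by
    have h0 := le_trans (abs_nonneg (x i0))
      (Finset.le_sup' (f := fun i => |x i|) (Finset.mem_univ i0))
    linarith
  set T : ℝ := 6*k*(M+3) with hTdef
  set C : ℝ := (T + 2 + M)^(2*k) with hCdef
  have hC0 : (0:ℝ) ≤ C := by positivity
  -- eventually facts on 𝓝[>] 0
  have hev1 : ∀ᶠ ε : ℝ in 𝓝[>] 0, ε ≤ 1 :=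
    ((eventually_lt_nhds (by norm_num : (0:ℝ) < 1)).filter_mono
      nhdsWithin_le_nhds).mono fun ε hε => hε.le
  have hxt : Tendsto (xeps k) (𝓝[>] (0:ℝ)) atTop := by
    have k0 : (0:ℝ) < 1/(2*(k:ℝ)) := by positivity
    have ht1 : Tendsto (fun ε : ℝ => ε ^ ((3:ℝ)/2)) (𝓝[>] 0) (𝓝[>] 0) := by
      apply tendsto_nhdsWithin_of_tendsto_nhds_of_eventually_within
      · have := (Real.continuousAt_rpow_const 0 ((3:ℝ)/2) (Or.inr (by norm_num))).tendsto
        rw [Real.zero_rpow (by norm_num)] at this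
        exact this.mono_left nhdsWithin_le_nhds
      · filter_upwards [self_mem_nhdsWithin] with ε hε
        exact Real.rpow_pos_of_pos hε _
    have ht2 : Tendsto (fun ε : ℝ => ε ^ (-(3:ℝ)/2)) (𝓝[>] (0:ℝ)) atTop := by
      apply ht1.inv_tendsto_nhdsGT_zero.congr'
      filter_upwards [self_mem_nhdsWithin] with ε hε
      rw [Pi.inv_apply, ← Real.rpow_neg (le_of_lt hε)]
      norm_num
    have ht3 : Tendsto (fun t : ℝ => (3*t) ^ ((1:ℝ)/(2*(k:ℝ)))) atTop atTop :=
      (tendsto_rpow_atTop k0).comp (Tendsto.const_mul_atTop (by norm_num) tendsto_id)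
    exact ht3.comp ht2
  have hev2 : ∀ᶠ ε : ℝ in 𝓝[>] 0, T ≤ xeps k ε := hxt.eventually_ge_atTop T
  have hg0 : Tendsto (fun ε : ℝ => 8*ε + 18*ε^((1:ℝ)/4) + C*ε^((3:ℝ)/2)) (𝓝 0) (𝓝 0) := by
    have c1 : ContinuousAt (fun ε : ℝ => ε ^ ((1:ℝ)/4)) 0 :=
      Real.continuousAt_rpow_const 0 _ (Or.inr (by norm_num))
    have c2 : ContinuousAt (fun ε : ℝ => ε ^ ((3:ℝ)/2)) 0 :=
      Real.continuousAt_rpow_const 0 _ (Or.inr (by norm_num))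
    have call : ContinuousAt (fun ε : ℝ => 8*ε + 18*ε^((1:ℝ)/4) + C*ε^((3:ℝ)/2)) 0 :=
      ((continuousAt_id.const_mul 8).add (c1.const_mul 18)).add (c2.const_mul C)
    have hval0 : (fun ε : ℝ => 8*ε + 18*ε^((1:ℝ)/4) + C*ε^((3:ℝ)/2)) 0 = 0 := by
      simp [Real.zero_rpow (by norm_num : ((1:ℝ)/4) ≠ 0),
        Real.zero_rpow (by norm_num : ((3:ℝ)/2) ≠ 0)]
    have := call.tendsto
    convert this using 2
    simp [Real.zero_rpow (show ((1:ℝ)/4) ≠ 0 by norm_num),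
      Real.zero_rpow (show ((3:ℝ)/2) ≠ 0 by norm_num)]
  have hev3 : ∀ᶠ ε : ℝ in 𝓝[>] 0,
      8*ε + 18*ε^((1:ℝ)/4) + C*ε^((3:ℝ)/2) < min h (1/2) := by
    have hpos : (0:ℝ) < min h (1/2) := lt_min hh0 (by norm_num)
    exact (hg0.mono_left nhdsWithin_le_nhds).eventually_lt_const hpos
  obtain ⟨ε₀, hε₀mem, hsub⟩ :=
    mem_nhdsGT_iff_exists_Ioo_subset.1 ((hev1.and (hev2.and hev3)) :
      {ε : ℝ | ε ≤ 1 ∧ T ≤ xeps k ε ∧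
        8*ε + 18*ε^((1:ℝ)/4) + C*ε^((3:ℝ)/2) < min h (1/2)} ∈ 𝓝[>] (0:ℝ))
  refine ⟨ε₀, hε₀mem, fun ε hε0 hεlt => ?_⟩
  obtain ⟨hε1, hT, hg⟩ := hsub ⟨hε0, hεlt⟩
  have hG : 8*ε + 6*ε*(xeps k ε)^2 + C * ε ^ ((3:ℝ)/2) < min h (1/2) := by
    have := xeps_sq k hk ε hε0 hε1
    linarith
  set a := xeps k ε with hadef
  have ha0 : 0 < a := by
    have : (0:ℝ) < T := by nlinarith
    linarith
  -- basic facts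
  have hval := uu_val k x ε i0
  have hcont := uu_continuous k x ε
  have hSopen : IsOpen {p : ℝ × ℝ | 0 < uu k x ε p} :=
    isOpen_lt continuous_const hcont
  have hp0 : (x i0, 0) ∈ {p : ℝ × ℝ | 0 < uu k x ε p} := by
    rw [Set.mem_setOf_eq, hval]; norm_num
  have hOm : Omeg k hk x ε
      = connectedComponentIn {p : ℝ × ℝ | 0 < uu k x ε p} (x i0, 0) := rfl
  -- subset of rectangle
  have hTM : M + 1 ≤ T := by nlinarith
  have hp0R : (x i0, 0) ∈ Set.Ioo (-a) a ×ˢ Set.Ioo (-(1+h)) (1+h) := by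
    constructor
    · have := abs_le.1 (hM i0)
      constructor <;> simp only [] <;> [nlinarith; nlinarith]
    · constructor <;> simp <;> linarith
  have hsubR : Omeg k hk x ε ⊆ Set.Ioo (-a) a ×ˢ Set.Ioo (-(1+h)) (1+h) := by
    rw [hOm]
    have hK : IsClosed (Set.Icc (-a) a ×ˢ Set.Icc (-(1+h)) (1+h)) :=
      isClosed_Icc.prod isClosed_Icc
    have hRK : Set.Ioo (-a) a ×ˢ Set.Ioo (-(1+h)) (1+h)
        ⊆ Set.Icc (-a) a ×ˢ Set.Icc (-(1+h)) (1+h) :=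
      Set.prod_mono Set.Ioo_subset_Icc_self Set.Ioo_subset_Icc_self
    apply IsPreconnected.subset_left_of_subset_union
      (isOpen_Ioo.prod isOpen_Ioo) hK.isOpen_compl
      (Set.disjoint_left.mpr fun p hp hpc => hpc (hRK hp))
    · -- component ⊆ R ∪ Kᶜ
      intro p hp
      have hpu : 0 < uu k x ε p :=
        connectedComponentIn_subset {q : ℝ × ℝ | 0 < uu k x ε q} (x i0, 0) hp
      rw [Set.mem_union]
      by_contra hcon
      push_neg at hcon
      obtain ⟨hnR, hnKc⟩ := hcon
      rw [Set.notMem_compl_iff] at hnKc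
      obtain ⟨hpx, hpy⟩ := hnKc
      rw [Set.mem_Icc] at hpx hpy
      have hXle : |p.1| ≤ a := abs_le.2 hpx
      have hYle : |p.2| ≤ 1+h := abs_le.2 hpy
      have hedge : a ≤ |p.1| ∨ 1+h ≤ |p.2| := by
        by_contra hcon2
        push_neg at hcon2
        exact hnR ⟨Set.mem_Ioo.2 (abs_lt.1 hcon2.1), Set.mem_Ioo.2 (abs_lt.1 hcon2.2)⟩
      have hb := boundary k hk x h M hh0 hh1 hM hM1 ε hε0 hT hG p.1 p.2 hXle hYle hedge
      rw [show ((p.1 : ℝ), (p.2 : ℝ)) = p from rfl] at hb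
      linarith
    · exact ⟨(x i0, 0), mem_connectedComponentIn hp0, hp0R⟩
    · exact (isConnected_connectedComponentIn_iff.2 hp0).isPreconnected
  refine ⟨hval, by norm_num, ⟨_, mem_connectedComponentIn hp0⟩,
    hSopen.connectedComponentIn, isConnected_connectedComponentIn_iff.2 hp0,
    hsubR, ?_⟩
  exact (((Metric.isBounded_Ioo _ _).prod (Metric.isBounded_Ioo _ _)).subset hsubR)
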